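/- Let ζ ∈ (0,1), δ ∈ (0, ζ), and t ∈ [0, ζ - δ], and let P, P* ∈ [0,1] be real numbers. Then 1{P ≤ t} - 1{P* ≤ t + δ} ≤ (1/δ)·|min(P, ζ) - min(P*, ζ)|. Similarly, for t ∈ (0, ζ] and δ ∈ (0, t): 1{P ≤ t} - 1{P* ≤ t - δ} ≥ -(1/δ)·|min(P, ζ) - min(P*, ζ)|. -/
import Mathlib


/-- Deterministic smoothing inequality converting differences of threshold indicators into
`L¹`-type distances between truncated p-values. -/
theorem stmt_17 (ζ : ℝ) (hζ : ζ ∈ Set.Ioo (0 : ℝ) 1)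
    (P Pstar : ℝ) (hP : P ∈ Set.Icc (0 : ℝ) 1) (hPstar : Pstar ∈ Set.Icc (0 : ℝ) 1) :
    (∀ δ t : ℝ, δ ∈ Set.Ioo 0 ζ → t ∈ Set.Icc 0 (ζ - δ) →
      (if P ≤ t then (1 : ℝ) else 0) - (if Pstar ≤ t + δ then (1 : ℝ) else 0) ≤
        (1 / δ) * |min P ζ - min Pstar ζ|) ∧
    (∀ t δ : ℝ, t ∈ Set.Ioc 0 ζ → δ ∈ Set.Ioo 0 t →
      -((1 / δ) * |min P ζ - min Pstar ζ|) ≤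
        (if P ≤ t then (1 : ℝ) else 0) - (if Pstar ≤ t - δ then (1 : ℝ) else 0)) := by
  obtain ⟨hζ0, hζ1⟩ := hζ
  have habs := abs_nonneg (min P ζ - min Pstar ζ)
  have hle := le_abs_self (min P ζ - min Pstar ζ)
  have hnle := neg_abs_le (min P ζ - min Pstar ζ)
  constructor
  · intro δ t ⟨hδ0, hδζ⟩ ⟨ht0, htζ⟩
    split_ifs with h1 h2 h2
    · have hr : (0:ℝ) ≤ (1/δ) * |min P ζ - min Pstar ζ| := by positivity
      linarith
    · -- P ≤ t, Pstar > t + δ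
      have hminP : min P ζ = P := min_eq_left (by linarith)
      have hminPs : t + δ ≤ min Pstar ζ := le_min (by linarith) (by linarith)
      rw [div_mul_eq_mul_div, one_mul, le_div_iff₀ hδ0]
      rw [hminP] at hle hnle ⊢
      nlinarith
    · have hr : (0:ℝ) ≤ (1/δ) * |min P ζ - min Pstar ζ| := by positivity
      linarith
    · have hr : (0:ℝ) ≤ (1/δ) * |min P ζ - min Pstar ζ| := by positivity
      linarith
  · intro t δ ⟨ht0, htζ⟩ ⟨hδ0, hδt⟩
    split_ifs with h1 h2 h2
    · have hr : (0:ℝ) ≤ (1/δ) * |min P ζ - min Pstar ζ| := by positivity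
      linarith
    · have hr : (0:ℝ) ≤ (1/δ) * |min P ζ - min Pstar ζ| := by positivity
      linarith
    · -- P > t, Pstar ≤ t - δ
      have hminPs : min Pstar ζ = Pstar := min_eq_left (by linarith)
      have hminP : t ≤ min P ζ := le_min (by linarith) (by linarith)
      have key : δ ≤ |min P ζ - min Pstar ζ| := by
        rw [hminPs] at hle ⊢
        nlinarith
      have h1' : (1:ℝ) ≤ (1/δ) * |min P ζ - min Pstar ζ| := by
        rw [div_mul_eq_mul_div, one_mul, le_div_iff₀ hδ0]
        linarith
      linarith
    · have hr : (0:ℝ) ≤ (1/δ) * |min P ζ - min Pstar ζ| := by positivity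
      linarith
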